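/- Bretagnolle–Huber inequality: for probability measures P and Q on the same measurable space and any measurable event A, P(A) + Q(Aᶜ) ≥ (1/2) exp(−KL(P,Q)). -/

import Mathlib

open MeasureTheory Real
open scoped ENNReal

/-- Bretagnolle–Huber inequality: for probability measures `P`, `Q` and any
measurable event `A`, we have `P(A) + Q(Aᶜ) ≥ (1/2) exp (-KL(P,Q))`, where the
KL divergence is expressed as the integral of the log Radon–Nikodym derivative
(the case `¬ P ≪ Q`, i.e. `KL = ∞`, being trivial). -/
theorem bretagnolle_huber {Ω : Type*} [MeasurableSpace Ω]
    (P Q : Measure Ω) [IsProbabilityMeasure P] [IsProbabilityMeasure Q]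
    (A : Set Ω) (hA : MeasurableSet A)
    (hac : P ≪ Q)
    (hint : Integrable (fun x => Real.log ((P.rnDeriv Q x).toReal)) P) :
    ENNReal.ofReal ((1 / 2) *
        Real.exp (-(∫ x, Real.log ((P.rnDeriv Q x).toReal) ∂P)))
      ≤ P A + Q Aᶜ := by
  set p : Ω → ℝ≥0∞ := P.rnDeriv Q with hpdef
  have hpm : Measurable p := Measure.measurable_rnDeriv P Q
  have hp1 : ∫⁻ x, p x ∂Q = 1 := by
    rw [Measure.lintegral_rnDeriv hac]; simp
  set m : ℝ≥0∞ := ∫⁻ x, min (p x) 1 ∂Q with hmdef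
  set S : ℝ≥0∞ := ∫⁻ x, p x ^ (1/2 : ℝ) ∂Q with hSdef
  -- auxiliary: a ^ (1/2) ≤ a + 1 and max a 1 ≤ a + 1
  have hhalf : ∀ a : ℝ≥0∞, a ^ (1/2 : ℝ) ≤ a + 1 := by
    intro a
    rcases le_total a 1 with h | h
    · exact le_trans (ENNReal.rpow_le_one h (by norm_num)) le_add_self
    · calc a ^ (1/2 : ℝ) ≤ a ^ (1 : ℝ) :=
            ENNReal.rpow_le_rpow_of_exponent_le h (by norm_num)
        _ = a := ENNReal.rpow_one a
        _ ≤ a + 1 := le_self_add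
  have hsum2 : ∫⁻ x, (p x + 1) ∂Q = 2 := by
    rw [lintegral_add_right _ measurable_const, hp1, lintegral_one, measure_univ]
    norm_num
  have hS2 : S ≤ 2 := by
    rw [hSdef, ← hsum2]
    exact lintegral_mono fun x => hhalf (p x)
  have hSne : S ≠ ∞ := (hS2.trans_lt (by norm_num)).ne
  have hm1 : m ≤ 1 := by
    rw [hmdef]
    calc ∫⁻ x, min (p x) 1 ∂Q ≤ ∫⁻ _, 1 ∂Q := lintegral_mono fun x => min_le_right _ _
      _ = 1 := by rw [lintegral_one, measure_univ]
  have hmne : m ≠ ∞ := (hm1.trans_lt (by norm_num)).ne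
  -- Hölder (Cauchy-Schwarz)
  have hsq : ∀ a : ℝ≥0∞, (a ^ (1/2 : ℝ)) ^ (2 : ℝ) = a := by
    intro a
    rw [← ENNReal.rpow_mul]
    norm_num
  have hroot_mul : ∀ a : ℝ≥0∞, a ^ (1/2 : ℝ) * a ^ (1/2 : ℝ) = a := by
    intro a
    rw [← ENNReal.rpow_add_of_nonneg (1/2 : ℝ) (1/2 : ℝ) (by norm_num) (by norm_num)]
    norm_num
  have hconj : (2 : ℝ).HolderConjugate 2 := ⟨by norm_num, by norm_num, by norm_num⟩
  have hmin_meas : Measurable fun x => (min (p x) 1) ^ (1/2 : ℝ) :=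
    ENNReal.continuous_rpow_const.measurable.comp (hpm.min measurable_const)
  have hmax_meas : Measurable fun x => (max (p x) 1) ^ (1/2 : ℝ) :=
    ENNReal.continuous_rpow_const.measurable.comp (hpm.max measurable_const)
  have hHolder : S ≤ m ^ (1/2 : ℝ) * (2 : ℝ≥0∞) ^ (1/2 : ℝ) := by
    have h := ENNReal.lintegral_mul_le_Lp_mul_Lq Q hconj hmin_meas.aemeasurable
      hmax_meas.aemeasurable
    have hfg : ∀ x, ((fun x => (min (p x) 1) ^ (1/2 : ℝ)) * fun x => (max (p x) 1) ^ (1/2 : ℝ)) x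
        = p x ^ (1/2 : ℝ) := by
      intro x
      simp only [Pi.mul_apply]
      rw [← ENNReal.mul_rpow_of_nonneg _ _ (by norm_num : (0:ℝ) ≤ 1/2), min_mul_max, mul_one]
    rw [lintegral_congr hfg] at h
    refine le_trans h ?_
    have e1 : ∫⁻ x, ((min (p x) 1) ^ (1/2 : ℝ)) ^ (2 : ℝ) ∂Q = m := by
      rw [hmdef]; exact lintegral_congr fun x => hsq _
    have e2 : ∫⁻ x, ((max (p x) 1) ^ (1/2 : ℝ)) ^ (2 : ℝ) ∂Q ≤ 2 := by
      rw [← hsum2]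
      refine lintegral_mono fun x => ?_
      rw [hsq]
      rcases le_total (p x) 1 with h' | h'
      · rw [max_eq_right h']; exact le_add_self
      · rw [max_eq_left h']; exact le_self_add
    rw [e1]
    gcongr
  have hSS : S * S ≤ m * 2 := by
    calc S * S ≤ (m ^ (1/2 : ℝ) * (2 : ℝ≥0∞) ^ (1/2 : ℝ))
        * (m ^ (1/2 : ℝ) * (2 : ℝ≥0∞) ^ (1/2 : ℝ)) := mul_le_mul' hHolder hHolder
      _ = (m ^ (1/2 : ℝ) * m ^ (1/2 : ℝ)) * ((2:ℝ≥0∞) ^ (1/2 : ℝ) * (2:ℝ≥0∞) ^ (1/2 : ℝ)) := by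
          ring
      _ = m * 2 := by rw [hroot_mul, hroot_mul]
  -- m bounds P A + Q Aᶜ
  have hmA : m ≤ P A + Q Aᶜ := by
    rw [hmdef, ← lintegral_add_compl _ hA]
    refine add_le_add ?_ ?_
    · calc ∫⁻ x in A, min (p x) 1 ∂Q ≤ ∫⁻ x in A, p x ∂Q :=
            lintegral_mono fun x => min_le_left _ _
        _ = P A := Measure.setLIntegral_rnDeriv hac A
    · calc ∫⁻ x in Aᶜ, min (p x) 1 ∂Q ≤ ∫⁻ _ in Aᶜ, 1 ∂Q :=
            lintegral_mono fun x => min_le_right _ _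
        _ = Q Aᶜ := setLIntegral_one _
  -- Jensen step
  set KL : ℝ := ∫ x, Real.log ((p x).toReal) ∂P with hKLdef
  set f : Ω → ℝ := fun x => (-(1/2 : ℝ)) * Real.log ((p x).toReal) with hfdef
  have hfint : Integrable f P := hint.const_mul _
  have hfmeas : Measurable fun x => Real.exp (f x) :=
    Real.measurable_exp.comp ((Real.measurable_log.comp hpm.ennreal_toReal).const_mul _)
  have haeP_pos : ∀ᵐ x ∂P, 0 < p x := Measure.rnDeriv_pos hac
  have haeP_fin : ∀ᵐ x ∂P, p x < ∞ := hac.ae_le (Measure.rnDeriv_lt_top P Q)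
  have h1 : ∀ᵐ x ∂P, ENNReal.ofReal (Real.exp (f x)) = p x ^ (-(1/2) : ℝ) := by
    filter_upwards [haeP_pos, haeP_fin] with x hx0 hxt
    have ht0 : 0 < (p x).toReal := ENNReal.toReal_pos hx0.ne' hxt.ne
    have : Real.exp (f x) = (p x).toReal ^ (-(1/2) : ℝ) := by
      rw [Real.rpow_def_of_pos ht0, hfdef]
      ring_nf
    rw [this, ENNReal.toReal_rpow, ENNReal.ofReal_toReal]
    simp [ENNReal.rpow_eq_top_iff, hx0.ne', hxt.ne]
  have hrpm : AEMeasurable (fun x => p x ^ (-(1/2) : ℝ)) Q :=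
    (ENNReal.continuous_rpow_const.measurable.comp hpm).aemeasurable
  have h2 : ∫⁻ x, p x ^ (-(1/2) : ℝ) ∂P = S := by
    rw [← lintegral_rnDeriv_mul hac hrpm, hSdef]
    refine lintegral_congr_ae ?_
    filter_upwards [Measure.rnDeriv_lt_top P Q] with x hx
    rw [← hpdef]
    rcases eq_or_ne (p x) 0 with h0 | h0
    · rw [h0, zero_mul, ENNReal.zero_rpow_of_pos (by norm_num)]
    · calc p x * p x ^ (-(1/2) : ℝ) = p x ^ (1 : ℝ) * p x ^ (-(1/2) : ℝ) := by
            rw [ENNReal.rpow_one]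
        _ = p x ^ ((1 : ℝ) + -(1/2)) := (ENNReal.rpow_add _ _ h0 hx.ne).symm
        _ = p x ^ (1/2 : ℝ) := by norm_num
  have hlint : ∫⁻ x, ENNReal.ofReal (Real.exp (f x)) ∂P = S := by
    rw [lintegral_congr_ae h1, h2]
  have hgi : Integrable (fun x => Real.exp (f x)) P := by
    refine ⟨hfmeas.aestronglyMeasurable, ?_⟩
    rw [hasFiniteIntegral_iff_ofReal (Filter.Eventually.of_forall fun x => (Real.exp_pos _).le)]
    rw [hlint]
    exact hS2.trans_lt (by norm_num)
  have hjensen : Real.exp (∫ x, f x ∂P) ≤ ∫ x, Real.exp (f x) ∂P :=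
    convexOn_exp.map_integral_le continuous_exp.continuousOn isClosed_univ
      (Filter.Eventually.of_forall fun x => Set.mem_univ _) hfint hgi
  have hintf : ∫ x, f x ∂P = -(1/2 : ℝ) * KL := by
    rw [hfdef, hKLdef, integral_const_mul]
  have hexp_eq : ∫ x, Real.exp (f x) ∂P = S.toReal := by
    rw [integral_eq_lintegral_of_nonneg_ae
      (Filter.Eventually.of_forall fun x => (Real.exp_pos _).le) hfmeas.aestronglyMeasurable,
      hlint]
  have hexpS : Real.exp (-(1/2 : ℝ) * KL) ≤ S.toReal := by
    rw [← hintf, ← hexp_eq]; exact hjensen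
  -- final chain
  have h3 : (1/2 : ℝ) * Real.exp (-KL) ≤ m.toReal := by
    have hexpsplit : Real.exp (-KL) = Real.exp (-(1/2 : ℝ) * KL) * Real.exp (-(1/2 : ℝ) * KL) := by
      rw [← Real.exp_add]; ring_nf
    have hSSR : S.toReal * S.toReal ≤ m.toReal * 2 := by
      have := ENNReal.toReal_mono (by finiteness) hSS
      rwa [ENNReal.toReal_mul, ENNReal.toReal_mul, ENNReal.toReal_ofNat] at this
    calc (1/2 : ℝ) * Real.exp (-KL)
        = (1/2 : ℝ) * (Real.exp (-(1/2 : ℝ) * KL) * Real.exp (-(1/2 : ℝ) * KL)) := by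
          rw [hexpsplit]
      _ ≤ (1/2 : ℝ) * (S.toReal * S.toReal) := by
          have := mul_le_mul hexpS hexpS (Real.exp_pos _).le ENNReal.toReal_nonneg
          linarith
      _ ≤ (1/2 : ℝ) * (m.toReal * 2) := by linarith
      _ = m.toReal := by ring
  calc ENNReal.ofReal ((1/2) * Real.exp (-KL)) ≤ ENNReal.ofReal m.toReal :=
        ENNReal.ofReal_le_ofReal h3
    _ = m := ENNReal.ofReal_toReal hmne
    _ ≤ P A + Q Aᶜ := hmA
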